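/- For each n with 1 ≤ n ≤ p, the chambers x₁C and e_nC lie on the same side of H_n (no point of x₁C is separated from a point of e_nC by H_n). -/

import Mathlib

set_option linter.unusedSectionVars false
set_option linter.unusedVariables false
set_option linter.unreachableTactic false
set_option linter.unusedTactic false
set_option maxHeartbeats 1000000




noncomputable section

namespace PaperBound

variable {B : Type} {W : Type} [Group W]

/-- The value `B(α_i, α_j)` of the canonical symmetric bilinear form on simple roots:
`-cos (π / m i j)` if `m i j ≠ ∞` (encoded as `M i j ≠ 0`) and `-1` otherwise. -/
def cB (M : CoxeterMatrix B) (i j : B) : ℝ :=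
  if M i j = 0 then -1 else - Real.cos (Real.pi / (M i j : ℝ))

/-- The canonical symmetric bilinear form on `V = B → ℝ` (coordinates in the basis of
simple roots `Δ = {α_i}`). -/
def bform [Fintype B] (M : CoxeterMatrix B) (u v : B → ℝ) : ℝ :=
  ∑ i, ∑ j, u i * v j * cB M i j

/-- The natural pairing `⟨-,-⟩ : V* × V → ℝ`, where both `V` and `V*` are modelled as
`B → ℝ` (coordinates of `V*` taken in the dual basis of `Δ`). -/
def pair [Fintype B] (f v : B → ℝ) : ℝ := ∑ i, f i * v i

/-- The simple root `α_i ∈ V`. -/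
def sroot [DecidableEq B] (i : B) : B → ℝ := Pi.single i 1

/-- `ρ` is the geometric representation of `W` on `V = B → ℝ`:
`s_i · v = v - 2 B(α_i, v) α_i`. -/
def IsGeomRep [Fintype B] [DecidableEq B] (M : CoxeterMatrix B) (cs : CoxeterSystem M W)
    (ρ : W →* (B → ℝ) ≃ₗ[ℝ] (B → ℝ)) : Prop :=
  ∀ (i : B) (v : B → ℝ), ρ (cs.simple i) v = v - (2 * bform M (sroot i) v) • sroot i

/-- `π` is the contragredient representation of `W` on `V* = B → ℝ`:
`⟨w·f, w·v⟩ = ⟨f, v⟩`. -/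
def IsContraRep [Fintype B] (ρ : W →* (B → ℝ) ≃ₗ[ℝ] (B → ℝ))
    (π : W →* (B → ℝ) ≃ₗ[ℝ] (B → ℝ)) : Prop :=
  ∀ (w : W) (f v : B → ℝ), pair (π w f) (ρ w v) = pair f v

/-- The set `Φ⁺` of positive roots: roots (elements of the orbit of the simple roots)
all of whose coordinates in the basis `Δ` are nonnegative. -/
def PhiPos [Fintype B] [DecidableEq B] (ρ : W →* (B → ℝ) ≃ₗ[ℝ] (B → ℝ)) : Set (B → ℝ) :=
  {α | (∃ (w : W) (i : B), α = ρ w (sroot i)) ∧ ∀ j, 0 ≤ α j}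

/-- The hyperplane `H_α = {f ∈ V* : ⟨f, α⟩ = 0}`. -/
def hyp [Fintype B] (α : B → ℝ) : Set (B → ℝ) := {f | pair f α = 0}

/-- The set `𝔓 = {H_α : α ∈ Φ⁺}` of hyperplanes. -/
def Planes [Fintype B] [DecidableEq B] (ρ : W →* (B → ℝ) ≃ₗ[ℝ] (B → ℝ)) :
    Set (Set (B → ℝ)) :=
  {H | ∃ α ∈ PhiPos (W := W) ρ, H = hyp α}

/-- The (open) dominant chamber `C = {f ∈ V* : ⟨f, α_i⟩ > 0 for all i}`. -/
def domCham (B : Type) [Fintype B] [DecidableEq B] : Set (B → ℝ) :=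
  {f | ∀ i : B, 0 < pair f (sroot i)}

/-- The Tits cone `U = ⋃_{w ∈ W} w · (closure of C)`. -/
def titsCone [Fintype B] [DecidableEq B] (π : W →* (B → ℝ) ≃ₗ[ℝ] (B → ℝ)) :
    Set (B → ℝ) :=
  ⋃ w : W, (π w) '' closure (domCham B)

/-- `A ⩀ B := A ∩ B ∩ U°`, where `U°` is the interior of the Tits cone. -/
def dcap [Fintype B] [DecidableEq B] (π : W →* (B → ℝ) ≃ₗ[ℝ] (B → ℝ))
    (A A' : Set (B → ℝ)) : Set (B → ℝ) :=
  A ∩ A' ∩ interior (titsCone π)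

/-- A set `𝔔` of hyperplanes is intersecting if `H₁ ⩀ H₂ ≠ ∅` for all `H₁, H₂ ∈ 𝔔`. -/
def Intersecting [Fintype B] [DecidableEq B] (π : W →* (B → ℝ) ≃ₗ[ℝ] (B → ℝ))
    (Q : Set (Set (B → ℝ))) : Prop :=
  ∀ H₁ ∈ Q, ∀ H₂ ∈ Q, (dcap π H₁ H₂).Nonempty

/-- The chamber `wC ⊆ V*`. -/
def cham [Fintype B] [DecidableEq B] (π : W →* (B → ℝ) ≃ₗ[ℝ] (B → ℝ)) (w : W) :
    Set (B → ℝ) :=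
  (π w) '' domCham B

/-- The hyperplane with root `α` separates `f, g ∈ V*`: `⟨f, α⟩⟨g, α⟩ < 0`. -/
def SepPt [Fintype B] (α f g : B → ℝ) : Prop := pair f α * pair g α < 0

/-- The hyperplane with root `α` separates the subsets `A, A'` of `V*`: every point of
`A ∪ A'` lies off the hyperplane, and every point of `A` is separated from every point
of `A'`. -/
def SepSets [Fintype B] (α : B → ℝ) (A A' : Set (B → ℝ)) : Prop :=
  (∀ f ∈ A ∪ A', pair f α ≠ 0) ∧ ∀ f ∈ A, ∀ g ∈ A', SepPt α f g

/-- The subset `A ⊆ V*` lies entirely on one side of the hyperplane with root `α`. -/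
def OneSide [Fintype B] (α : B → ℝ) (A : Set (B → ℝ)) : Prop :=
  (∀ f ∈ A, pair f α ≠ 0) ∧ ∀ f ∈ A, ∀ g ∈ A, ¬ SepPt α f g

/-- The hyperplane `H ∈ 𝔓` separates the subsets `A, A'` of `V*` (expressed via a
positive root `α` with `H = H_α`; this does not depend on the choice of `α`). -/
def SepSetsH [Fintype B] [DecidableEq B] (ρ : W →* (B → ℝ) ≃ₗ[ℝ] (B → ℝ))
    (H : Set (B → ℝ)) (A A' : Set (B → ℝ)) : Prop :=
  ∃ α ∈ PhiPos (W := W) ρ, H = hyp α ∧ SepSets α A A'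


/-- The open half-space bounded by the hyperplane with root `α` on the side not containing
the chamber `wC`. -/
def halfNeg [Fintype B] [DecidableEq B] (π : W →* (B → ℝ) ≃ₗ[ℝ] (B → ℝ)) (w : W)
    (α : B → ℝ) : Set (B → ℝ) :=
  {f | ∀ f₀ ∈ cham π w, pair f α * pair f₀ α < 0}

/-- Auxiliary recursion producing the sets `𝔄_i` (first component) together with the
cumulative unions `𝔄₀ ∪ ⋯ ∪ 𝔄_i` (second component), starting from `𝔄₀ = A0`:
`𝔄_{i+1} = {P ∈ Q ∖ (𝔄₀ ∪ ⋯ ∪ 𝔄_i) : P ⩀ σ(R) = ∅ for some R ∈ 𝔄_i}`. -/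
def AseqAux [Fintype B] [DecidableEq B] (π : W →* (B → ℝ) ≃ₗ[ℝ] (B → ℝ))
    (Q : Set (Set (B → ℝ))) (σ : W) (A0 : Set (Set (B → ℝ))) :
    ℕ → Set (Set (B → ℝ)) × Set (Set (B → ℝ))
  | 0 => (A0, A0)
  | i + 1 =>
    let prev := AseqAux π Q σ A0 i
    ({P | P ∈ Q ∧ P ∉ prev.2 ∧ ∃ R ∈ prev.1, dcap π P ((π σ) '' R) = ∅},
      prev.2 ∪ {P | P ∈ Q ∧ P ∉ prev.2 ∧ ∃ R ∈ prev.1, dcap π P ((π σ) '' R) = ∅})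

/-- The set `𝔄_i`. -/
def Aseq [Fintype B] [DecidableEq B] (π : W →* (B → ℝ) ≃ₗ[ℝ] (B → ℝ))
    (Q : Set (Set (B → ℝ))) (σ : W) (A0 : Set (Set (B → ℝ))) (i : ℕ) :
    Set (Set (B → ℝ)) :=
  (AseqAux π Q σ A0 i).1

section Words

variable {M : CoxeterMatrix B}

/-- The element `x′_n = x s₁ ⋯ ŝ_{i₁} ⋯ ŝ_{i_{n−1}} ⋯ s_{i_n − 1}`: the product of `x` and
the first `i_n - 1` letters of the word `ω`, with the letters at positions `i₁, …, i_{n−1}`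
omitted. (Positions are recorded `0`-based: the index `ι n : Fin ω.length` corresponds to
the letter `s_{i_{n+1}}` of the paper.) -/
def omitProd (cs : CoxeterSystem M W) (x : W) (ω : List B) {p : ℕ}
    (ι : Fin p → Fin ω.length) (n : Fin p) : W :=
  x * cs.wordProd (((List.finRange ω.length).filter
      (fun j : Fin ω.length => decide ((j : ℕ) < (ι n : ℕ) ∧ ∀ m : Fin p, m < n → j ≠ ι m))).map ω.get)

/-- The condition `ℓ(x′_n s_{i_n}) < ℓ(x′_n)` for all `n = 1, …, p`. -/
def DescCond (cs : CoxeterSystem M W) (x : W) (ω : List B) {p : ℕ}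
    (ι : Fin p → Fin ω.length) : Prop :=
  ∀ n : Fin p, cs.length (omitProd cs x ω ι n * cs.simple (ω.get (ι n))) <
    cs.length (omitProd cs x ω ι n)

/-- The element `x_n := x s₁ ⋯ s_{i_n − 1}`. -/
def xseq (cs : CoxeterSystem M W) (x : W) (ω : List B) {p : ℕ}
    (ι : Fin p → Fin ω.length) (n : Fin p) : W :=
  x * cs.wordProd (ω.take (ι n))

/-- The reflection `σ_n := x_n s_{i_n} x_n⁻¹`. -/
def sigmaseq (cs : CoxeterSystem M W) (x : W) (ω : List B) {p : ℕ}
    (ι : Fin p → Fin ω.length) (n : Fin p) : W :=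
  xseq cs x ω ι n * cs.simple (ω.get (ι n)) * (xseq cs x ω ι n)⁻¹

/-- The element `e_n := σ_n σ_{n−1} ⋯ σ₁`, with `e₀ = e`. -/
def eseq (cs : CoxeterSystem M W) (x : W) (ω : List B) {p : ℕ}
    (ι : Fin p → Fin ω.length) : ℕ → W
  | 0 => 1
  | n + 1 => (if h : n < p then sigmaseq cs x ω ι ⟨n, h⟩ else 1) * eseq cs x ω ι n

/-- A root of the hyperplane `H_n` corresponding to the reflection `σ_n`, namely
`x_n · α_{s_{i_n}}`. -/
def rootseq [Fintype B] [DecidableEq B] (cs : CoxeterSystem M W)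
    (ρ : W →* (B → ℝ) ≃ₗ[ℝ] (B → ℝ)) (x : W) (ω : List B) {p : ℕ}
    (ι : Fin p → Fin ω.length) (n : Fin p) : B → ℝ :=
  ρ (xseq cs x ω ι n) (sroot (ω.get (ι n)))

/-- The hyperplane `H_n ∈ 𝔓` corresponding to the reflection `σ_n`. -/
def Hseq [Fintype B] [DecidableEq B] (cs : CoxeterSystem M W)
    (ρ : W →* (B → ℝ) ≃ₗ[ℝ] (B → ℝ)) (x : W) (ω : List B) {p : ℕ}
    (ι : Fin p → Fin ω.length) (n : Fin p) : Set (B → ℝ) :=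
  hyp (rootseq cs ρ x ω ι n)

end Words



section Basics
variable [Fintype B] [DecidableEq B] {M : CoxeterMatrix B}

lemma cB_self (i : B) : cB M i i = 1 := by
  simp [cB, M.diagonal i]

lemma cB_symm (i j : B) : cB M i j = cB M j i := by
  have h : M.M i j = M.M j i := congrFun (congrFun M.isSymm j) i
  simp only [cB]
  show (if M.M i j = 0 then _ else _) = (if M.M j i = 0 then _ else _)
  rw [h]

lemma pair_sroot (f : B → ℝ) (i : B) : pair f (sroot i) = f i := by
  simp [pair, sroot, Pi.single_apply]

lemma bform_sroot (i : B) (v : B → ℝ) : bform M (sroot i) v = ∑ j, v j * cB M i j := by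
  unfold bform
  rw [Finset.sum_eq_single i]
  · simp [sroot]
  · intro b _ hb
    simp [sroot, Pi.single_apply, hb]
  · simp

lemma bform_sroot_sroot (i j : B) : bform M (sroot i) (sroot j) = cB M i j := by
  rw [bform_sroot, Finset.sum_eq_single j]
  · simp [sroot]
  · intro b _ hb
    simp [sroot, Pi.single_apply, hb]
  · simp

lemma bform_sroot_combo (i j : B) (a b : ℝ) :
    bform M (sroot i) (a • sroot i + b • sroot j) = a * cB M i i + b * cB M i j := by
  rw [bform_sroot]
  have : ∀ k, (a • sroot i + b • sroot j) k = a * (sroot i k) + b * (sroot j k) := by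
    intro k; simp
  simp_rw [this, add_mul, Finset.sum_add_distrib, mul_assoc]
  rw [← Finset.mul_sum, ← Finset.mul_sum]
  congr 1
  · congr 1
    rw [Finset.sum_eq_single i] <;> simp (config := {contextual := true}) [sroot, Pi.single_apply]
  · congr 1
    rw [Finset.sum_eq_single j] <;> simp (config := {contextual := true}) [sroot, Pi.single_apply]

variable {cs : CoxeterSystem M W} {ρ : W →* (B → ℝ) ≃ₗ[ℝ] (B → ℝ)}

lemma geom_simple_self (hρ : IsGeomRep M cs ρ) (i : B) :
    ρ (cs.simple i) (sroot i) = -sroot i := by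
  rw [hρ i, bform_sroot_sroot, cB_self]
  module

lemma geom_simple_combo (hρ : IsGeomRep M cs ρ) (i j : B) (a b : ℝ) :
    ρ (cs.simple i) (a • sroot i + b • sroot j)
      = (-a - 2 * cB M i j * b) • sroot i + b • sroot j := by
  rw [hρ i, bform_sroot_combo, cB_self]
  module


end Basics

section Dihedral
variable [Fintype B] [DecidableEq B] {M : CoxeterMatrix B}
variable {cs : CoxeterSystem M W} {ρ : W →* (B → ℝ) ≃ₗ[ℝ] (B → ℝ)}

/-- Chebyshev-like sequence: `useq c k = sin ((k+1)θ)/sin θ` when `c = -cos θ`. -/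
def useq (c : ℝ) : ℕ → ℝ
  | 0 => 1
  | 1 => -2*c
  | (k+2) => -2*c * useq c (k+1) - useq c k

lemma useq_zero (c : ℝ) : useq c 0 = 1 := rfl
lemma useq_one (c : ℝ) : useq c 1 = -2*c := rfl
lemma useq_add_two (c : ℝ) (k : ℕ) : useq c (k+2) = -2*c * useq c (k+1) - useq c k := rfl

lemma useq_neg_one (k : ℕ) : useq (-1) k = k + 1 := by
  induction k using Nat.twoStepInduction with
  | zero => norm_num [useq_zero]
  | one => norm_num [useq_one]
  | more k ih1 ih2 => rw [useq_add_two, ih1, ih2]; push_cast; ring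

lemma useq_sin (θ : ℝ) (k : ℕ) :
    useq (-Real.cos θ) k * Real.sin θ = Real.sin ((k + 1) * θ) := by
  induction k using Nat.twoStepInduction with
  | zero => norm_num [useq_zero]
  | one =>
    rw [useq_one]
    have : ((1:ℕ) + 1 : ℝ) * θ = θ + θ := by push_cast; ring
    rw [this, Real.sin_add]; ring
  | more k ih1 ih2 =>
    rw [useq_add_two]
    have e1 : ((k + 2 : ℕ) + 1 : ℝ) * θ = ((k+1:ℕ) + 1) * θ + θ := by push_cast; ring
    have e2 : ((k : ℕ) + 1 : ℝ) * θ = ((k+1:ℕ) + 1) * θ - θ := by push_cast; ring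
    rw [e1, Real.sin_add, sub_mul, mul_assoc, ih1, ih2, e2, Real.sin_sub]
    ring

lemma useq_nonneg (M : CoxeterMatrix B) (i j : B) (hij : i ≠ j) (k : ℕ)
    (hk : M i j ≠ 0 → k + 1 ≤ M i j) : 0 ≤ useq (cB M i j) k := by
  by_cases h0 : M i j = 0
  · have : cB M i j = -1 := by simp [cB, h0]
    rw [this, useq_neg_one]; positivity
  · have hm2 : 2 ≤ M i j := by
      have := M.off_diagonal i j hij
      omega
    have hmpos : (0:ℝ) < (M i j : ℝ) := by
      have : 0 < M i j := by omega
      exact_mod_cast this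
    set θ : ℝ := Real.pi / (M i j : ℝ) with hθ
    have hc : cB M i j = -Real.cos θ := by simp [cB, h0, hθ]
    have hθpos : 0 < θ := by rw [hθ]; positivity
    have hθlt : θ < Real.pi := by
      rw [hθ]
      apply div_lt_self Real.pi_pos
      exact_mod_cast hm2
    have hsin : 0 < Real.sin θ := Real.sin_pos_of_pos_of_lt_pi hθpos hθlt
    have hk' : (k:ℝ) + 1 ≤ (M i j : ℝ) := by exact_mod_cast hk h0
    have hval : 0 ≤ Real.sin ((k + 1) * θ) := by
      apply Real.sin_nonneg_of_nonneg_of_le_pi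
      · positivity
      · have h1 : ((k:ℝ)+1) * θ ≤ (M i j : ℝ) * θ :=
          mul_le_mul_of_nonneg_right hk' (le_of_lt hθpos)
        have h2 : (M i j : ℝ) * θ = Real.pi := by
          rw [hθ]; field_simp
        linarith
    have hus := useq_sin θ k
    rw [hc]
    rw [← hus] at hval
    exact (mul_nonneg_iff_of_pos_right hsin).mp hval

lemma step_j (hρ : IsGeomRep M cs ρ) (i j : B) (u v : ℝ) (w : W)
    (h : ρ w (sroot i) = u • sroot i + v • sroot j) :
    ρ (cs.simple j * w) (sroot i) = u • sroot i + (-v - 2*cB M i j*u) • sroot j := by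
  rw [map_mul]
  show ρ (cs.simple j) (ρ w (sroot i)) = _
  rw [h]
  have e : u • (sroot i : B → ℝ) + v • sroot j = v • sroot j + u • sroot i := by module
  rw [e, geom_simple_combo hρ j i, cB_symm j i]
  module

lemma step_i (hρ : IsGeomRep M cs ρ) (i j : B) (u v : ℝ) (w : W)
    (h : ρ w (sroot i) = u • sroot i + v • sroot j) :
    ρ (cs.simple i * w) (sroot i) = (-u - 2*cB M i j*v) • sroot i + v • sroot j := by
  rw [map_mul]
  show ρ (cs.simple i) (ρ w (sroot i)) = _
  rw [h, geom_simple_combo hρ i j]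

lemma dih_formula (hρ : IsGeomRep M cs ρ) (i j : B) (hij : i ≠ j) (k : ℕ) :
    ρ (cs.wordProd (CoxeterSystem.alternatingWord i j (2*k+1))) (sroot i)
        = useq (cB M i j) (2*k) • sroot i + useq (cB M i j) (2*k+1) • sroot j
    ∧ ρ (cs.wordProd (CoxeterSystem.alternatingWord i j (2*k+2))) (sroot i)
        = useq (cB M i j) (2*k+2) • sroot i + useq (cB M i j) (2*k+1) • sroot j := by
  set c := cB M i j with hcdef
  have base0 : ρ (cs.wordProd (CoxeterSystem.alternatingWord i j 0)) (sroot i)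
      = useq c 0 • sroot i + (0:ℝ) • sroot j := by
    show ρ (cs.wordProd []) (sroot i) = _
    rw [CoxeterSystem.wordProd_nil, map_one, useq_zero]
    show sroot i = _
    module
  induction k with
  | zero =>
    have h1 : ρ (cs.wordProd (CoxeterSystem.alternatingWord i j (2*0+1))) (sroot i)
        = useq c (2*0) • sroot i + useq c (2*0+1) • sroot j := by
      show ρ (cs.wordProd (CoxeterSystem.alternatingWord i j (0+1))) (sroot i) = _
      rw [CoxeterSystem.alternatingWord_succ', if_pos (by norm_num), CoxeterSystem.wordProd_cons,
        ← CoxeterSystem.wordProd_cons]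
      show ρ (cs.wordProd (j :: CoxeterSystem.alternatingWord i j 0)) (sroot i) = _
      rw [CoxeterSystem.wordProd_cons]
      rw [step_j hρ i j _ _ _ base0]
      rw [useq_one, useq_zero]
      show _ = (1:ℝ) • sroot i + (-2*c) • sroot j
      module
    refine ⟨h1, ?_⟩
    show ρ (cs.wordProd (CoxeterSystem.alternatingWord i j (1+1))) (sroot i) = _
    rw [CoxeterSystem.alternatingWord_succ', if_neg (by norm_num), CoxeterSystem.wordProd_cons]
    rw [step_i hρ i j _ _ _ h1]
    show _ = useq c (0+2) • sroot i + useq c (2*0+1) • sroot j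
    rw [useq_add_two, useq_one, useq_zero]
    show (-useq c (2*0) - 2*c*useq c (2*0+1)) • sroot i + useq c (2*0+1) • sroot j = _
    rw [show (2:ℕ)*0 = 0 from rfl, show (2:ℕ)*0+1 = 1 from rfl, useq_one, useq_zero]
    module
  | succ k ih =>
    obtain ⟨ih1, ih2⟩ := ih
    have r2 : useq c (2*k+2) = -2*c*useq c (2*k+1) - useq c (2*k) := useq_add_two c (2*k)
    have r3 : useq c (2*k+3) = -2*c*useq c (2*k+2) - useq c (2*k+1) := useq_add_two c (2*k+1)
    have r4 : useq c (2*k+4) = -2*c*useq c (2*k+3) - useq c (2*k+2) := useq_add_two c (2*k+2)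
    have h1 : ρ (cs.wordProd (CoxeterSystem.alternatingWord i j ((2*k+2)+1))) (sroot i)
        = useq c (2*k+2) • sroot i + useq c (2*k+3) • sroot j := by
      rw [CoxeterSystem.alternatingWord_succ', if_pos ⟨k+1, by ring⟩,
        CoxeterSystem.wordProd_cons]
      rw [step_j hρ i j _ _ _ ih2, ← hcdef]
      simp only [r3, r2]
      try module
    have h2 : ρ (cs.wordProd (CoxeterSystem.alternatingWord i j ((2*k+3)+1))) (sroot i)
        = useq c (2*k+4) • sroot i + useq c (2*k+3) • sroot j := by
      rw [CoxeterSystem.alternatingWord_succ',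
        if_neg (by simp [Nat.even_add_one, parity_simps]), CoxeterSystem.wordProd_cons]
      rw [step_i hρ i j _ _ _ h1, ← hcdef]
      simp only [r4, r3, r2]
      try module
    constructor
    · simp only [show 2*(k+1)+1 = (2*k+2)+1 from by ring, show 2*(k+1) = 2*k+2 from by ring, h1]
      try simp only [show (2:ℕ)*k+2+1 = 2*k+3 from by ring]
    · simp only [show 2*(k+1)+2 = (2*k+3)+1 from by ring, h2]
      try simp only [show (2:ℕ)*k+3+1 = 2*k+4 from by ring, show 2*(k+1)+1 = 2*k+3 from by ring]

lemma dih_main (hρ : IsGeomRep M cs ρ) (i j : B) (hij : i ≠ j) (q : ℕ)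
    (hq : M i j ≠ 0 → q < M i j) :
    ∃ a b : ℝ, 0 ≤ a ∧ 0 ≤ b ∧
      ρ (cs.wordProd (CoxeterSystem.alternatingWord i j q)) (sroot i)
        = a • sroot i + b • sroot j := by
  match q with
  | 0 =>
    refine ⟨1, 0, by norm_num, le_refl 0, ?_⟩
    show ρ (cs.wordProd []) (sroot i) = _
    rw [CoxeterSystem.wordProd_nil, map_one]
    show sroot i = _
    module
  | (q'+1) =>
    rcases Nat.even_or_odd q' with ⟨k, hk⟩ | ⟨k, hk⟩
    · -- q = 2k+1
      have hq1 : q' + 1 = 2*k+1 := by omega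
      rw [hq1]
      refine ⟨useq (cB M i j) (2*k), useq (cB M i j) (2*k+1), ?_, ?_, (dih_formula hρ i j hij k).1⟩
      · exact useq_nonneg M i j hij (2*k) (fun h0 => by have := hq h0; omega)
      · exact useq_nonneg M i j hij (2*k+1) (fun h0 => by have := hq h0; omega)
    · -- q = 2k+2
      have hq1 : q' + 1 = 2*k+2 := by omega
      rw [hq1]
      refine ⟨useq (cB M i j) (2*k+2), useq (cB M i j) (2*k+1), ?_, ?_,
        (dih_formula hρ i j hij k).2⟩
      · exact useq_nonneg M i j hij (2*k+2) (fun h0 => by have := hq h0; omega)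
      · exact useq_nonneg M i j hij (2*k+1) (fun h0 => by have := hq h0; omega)

end Dihedral

section Positivity
variable [Fintype B] [DecidableEq B] {M : CoxeterMatrix B}
variable {cs : CoxeterSystem M W} {ρ : W →* (B → ℝ) ≃ₗ[ℝ] (B → ℝ)}

open CoxeterSystem in
theorem rho_nonneg (hρ : IsGeomRep M cs ρ) :
    ∀ (n : ℕ) (w : W) (i : B), cs.length w = n → ¬ cs.IsRightDescent w i →
      ∀ b : B, 0 ≤ ρ w (sroot i) b := by
  intro n
  induction n using Nat.strong_induction_on with
  | _ n IH =>
  intro w i hlen hdesc b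
  by_cases hw : w = 1
  · subst hw
    rw [map_one]
    show (0:ℝ) ≤ sroot i b
    simp [sroot, Pi.single_apply]
    positivity
  · obtain ⟨j, hj⟩ := cs.exists_rightDescent_of_ne_one hw
    have hij : i ≠ j := fun h => hdesc (h ▸ hj)
    have hw1 : 1 ≤ cs.length w := by
      rcases Nat.eq_zero_or_pos (cs.length w) with h | h
      · exact absurd (cs.length_eq_zero_iff.mp h) hw
      · exact h
    classical
    set Qset : ℕ → Prop := fun q =>
      cs.length (w * (cs.wordProd (alternatingWord i j q))⁻¹) + q = cs.length w with hQdef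
    have hQ1 : Qset 1 := by
      show cs.length (w * (cs.wordProd (alternatingWord i j 1))⁻¹) + 1 = cs.length w
      have : alternatingWord i j 1 = [j] := rfl
      rw [this, cs.wordProd_singleton, cs.inv_simple]
      exact cs.isRightDescent_iff.mp hj
    set q : ℕ := Nat.findGreatest Qset (cs.length w) with hqdef
    have hq1 : 1 ≤ q := Nat.le_findGreatest hw1 hQ1
    have hqQ : Qset q := Nat.findGreatest_spec hw1 hQ1
    have hqle : q ≤ cs.length w := Nat.findGreatest_le _
    have hQnot : ¬ Qset (q + 1) := by
      intro hcon
      rcases Nat.lt_or_ge (cs.length w) (q+1) with h | h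
      · have : q + 1 ≤ cs.length w := by
          have := hcon
          rw [hQdef] at this
          omega
        omega
      · exact Nat.findGreatest_is_greatest (by omega) h hcon
    clear_value q
    set u : W := cs.wordProd (alternatingWord i j q) with hudef
    set v : W := w * u⁻¹ with hvdef
    have hw_eq : w = v * u := by rw [hvdef]; group
    have hQq : cs.length v + q = cs.length w := hqQ
    have hlenu : cs.length u = q := by
      have h1 : cs.length u ≤ q := by
        have := cs.length_wordProd_le (alternatingWord i j q)
        rwa [CoxeterSystem.length_alternatingWord] at this
      have h2 : cs.length w ≤ cs.length v + cs.length u := by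
        rw [hw_eq]; exact cs.length_mul_le v u
      omega
    -- non-descent at the letter prepending alt q
    have hstep1 : ¬ cs.IsRightDescent v (if Even q then j else i) := by
      intro hcon
      apply hQnot
      show cs.length (w * (cs.wordProd (alternatingWord i j (q+1)))⁻¹) + (q+1) = cs.length w
      rw [CoxeterSystem.alternatingWord_succ', cs.wordProd_cons, mul_inv_rev, cs.inv_simple,
        ← mul_assoc]
      have : w * (cs.wordProd (alternatingWord i j q))⁻¹ = v := rfl
      rw [this]
      have := cs.isRightDescent_iff.mp hcon
      omega
    -- non-descent at the other letter
    have hstep2 : ¬ cs.IsRightDescent v (if Even q then i else j) := by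
      obtain ⟨q', rfl⟩ : ∃ q', q = q' + 1 := ⟨q - 1, by omega⟩
      intro hcon
      have hsplit : u = cs.simple (if Even q' then j else i) * cs.wordProd (alternatingWord i j q') := by
        rw [hudef, CoxeterSystem.alternatingWord_succ', cs.wordProd_cons]
      have hparity : (if Even (q'+1) then i else j) = (if Even q' then j else i) := by
        rcases Nat.even_or_odd q' with h | h
        · simp [h, Nat.even_add_one]
        · simp [Nat.not_even_iff_odd.mpr h, Nat.even_add_one, Nat.not_even_iff_odd, h]
      rw [hparity] at hcon
      have hle : cs.length w ≤ cs.length (v * cs.simple (if Even q' then j else i)) + q' := by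
        have e : w = (v * cs.simple (if Even q' then j else i)) * cs.wordProd (alternatingWord i j q') := by
          rw [hw_eq, hsplit]; group
        rw [e]
        have h1 := cs.length_mul_le (v * cs.simple (if Even q' then j else i))
          (cs.wordProd (alternatingWord i j q'))
        have h2 := cs.length_wordProd_le (alternatingWord i j q')
        rw [CoxeterSystem.length_alternatingWord] at h2
        omega
      have := cs.isRightDescent_iff.mp hcon
      omega
    have hvi : ¬ cs.IsRightDescent v i := by
      rcases Nat.even_or_odd q with h | h
      · have := hstep2; simpa [h] using this
      · have := hstep1; simpa [Nat.not_even_iff_odd.mpr h] using this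
    have hvj : ¬ cs.IsRightDescent v j := by
      rcases Nat.even_or_odd q with h | h
      · have := hstep1; simpa [h] using this
      · have := hstep2; simpa [Nat.not_even_iff_odd.mpr h] using this
    -- bound q < M i j when finite
    have hqm : M i j ≠ 0 → q < M i j := by
      intro hM0
      have hqle' : q ≤ M i j := by
        by_contra hcon
        push_neg at hcon
        have hred : cs.IsReduced (alternatingWord i j q) := by
          show cs.length (cs.wordProd (alternatingWord i j q)) = _
          rw [← hudef, hlenu, CoxeterSystem.length_alternatingWord]
        exact cs.not_isReduced_alternatingWord i j hM0 hcon hred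
      rcases Nat.lt_or_ge q (M i j) with h | h
      · exact h
      · exfalso
        have hqm' : q = M i j := by omega
        have hbraid : u = cs.wordProd (alternatingWord j i (M i j)) := by
          rw [hudef, hqm']
          have hsym : M.M j i = M.M i j := M.symmetric j i
          simpa [CoxeterSystem.braidWord, hsym] using cs.wordProd_braidWord_eq i j
        obtain ⟨m', hm'⟩ : ∃ m', M i j = m' + 1 := ⟨M i j - 1, by omega⟩
        have hconcat : alternatingWord j i (M i j) = (alternatingWord i j m').concat i := by
          rw [hm']; rfl
        have husi : u * cs.simple i = cs.wordProd (alternatingWord i j m') := by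
          rw [hbraid, hconcat, cs.wordProd_concat, mul_assoc, cs.simple_mul_simple_self, mul_one]
        have hlews : cs.length (w * cs.simple i) ≤ cs.length v + m' := by
          have e : w * cs.simple i = v * cs.wordProd (alternatingWord i j m') := by
            rw [hw_eq, mul_assoc, husi]
          rw [e]
          have h1 := cs.length_mul_le v (cs.wordProd (alternatingWord i j m'))
          have h2 := cs.length_wordProd_le (alternatingWord i j m')
          rw [CoxeterSystem.length_alternatingWord] at h2
          omega
        have : cs.IsRightDescent w i := by
          show cs.length (w * cs.simple i) < cs.length w
          omega
        exact hdesc this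
    -- decompose and conclude
    obtain ⟨a, bb, ha, hb, hform⟩ := dih_main hρ i j hij q hqm
    have hlenv : cs.length v < n := by omega
    have hvbound : ∀ b', 0 ≤ ρ v (sroot i) b' ∧ 0 ≤ ρ v (sroot j) b' := by
      intro b'
      exact ⟨IH (cs.length v) hlenv v i rfl hvi b', IH (cs.length v) hlenv v j rfl hvj b'⟩
    rw [hw_eq, map_mul]
    show (0:ℝ) ≤ (ρ v) ((ρ u) (sroot i)) b
    rw [← hudef] at hform
    rw [hform, map_add, map_smul, map_smul]
    show (0:ℝ) ≤ a * (ρ v) (sroot i) b + bb * (ρ v) (sroot j) b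
    have := hvbound b
    have h1 := mul_nonneg ha this.1
    have h2 := mul_nonneg hb this.2
    linarith

theorem rho_nonpos (hρ : IsGeomRep M cs ρ) (w : W) (i : B) (h : cs.IsRightDescent w i) :
    ∀ b : B, ρ w (sroot i) b ≤ 0 := by
  intro b
  have h' : ¬ cs.IsRightDescent (w * cs.simple i) i :=
    (cs.isRightDescent_iff_not_isRightDescent_mul).mp h
  have key := rho_nonneg hρ (cs.length (w * cs.simple i)) (w * cs.simple i) i rfl h' b
  have e : ρ w (sroot i) = - ρ (w * cs.simple i) (sroot i) := by
    calc ρ w (sroot i) = ρ (w * cs.simple i * cs.simple i) (sroot i) := by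
          rw [cs.simple_mul_simple_cancel_right]
      _ = (ρ (w * cs.simple i)) ((ρ (cs.simple i)) (sroot i)) := by rw [map_mul]; rfl
      _ = - ρ (w * cs.simple i) (sroot i) := by rw [geom_simple_self hρ, map_neg]
  rw [e]
  simpa using key

end Positivity

section ListLemmas
variable {α : Type*}

lemma mem_take_finRange {k c : ℕ} {x : Fin k} (hx : x ∈ (List.finRange k).take c) :
    (x : ℕ) < c := by
  obtain ⟨i, hi, hget⟩ := List.getElem_of_mem hx
  have h1 : i < c := by
    have := hi
    simp only [List.length_take, List.length_finRange] at this
    omega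
  rw [List.getElem_take] at hget
  rw [List.getElem_finRange] at hget
  subst hget
  simpa using h1

lemma mem_drop_finRange {k c : ℕ} {x : Fin k} (hx : x ∈ (List.finRange k).drop c) :
    c ≤ (x : ℕ) := by
  obtain ⟨i, hi, hget⟩ := List.getElem_of_mem hx
  rw [List.getElem_drop] at hget
  rw [List.getElem_finRange] at hget
  subst hget
  simp

/-- Splitting a filter over `finRange` at a positional cutoff. -/
lemma filter_finRange_split (k c : ℕ) (P Q R : Fin k → Bool)
    (h1 : ∀ j : Fin k, (j : ℕ) < c → R j = P j)
    (h2 : ∀ j : Fin k, c ≤ (j : ℕ) → R j = Q j)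
    (hP : ∀ j : Fin k, P j = true → (j : ℕ) < c)
    (hQ : ∀ j : Fin k, Q j = true → c ≤ (j : ℕ)) :
    (List.finRange k).filter R = (List.finRange k).filter P ++ (List.finRange k).filter Q := by
  have hsplit : List.finRange k = (List.finRange k).take c ++ (List.finRange k).drop c :=
    (List.take_append_drop c (List.finRange k)).symm
  have hPd : (List.finRange k).filter P = ((List.finRange k).take c).filter P := by
    conv_lhs => rw [hsplit]
    rw [List.filter_append]
    have : ((List.finRange k).drop c).filter P = [] := by
      rw [List.filter_eq_nil_iff]
      intro a ha hPa
      exact absurd (hP a hPa) (by have := mem_drop_finRange ha; omega)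
    rw [this, List.append_nil]
  have hQd : (List.finRange k).filter Q = ((List.finRange k).drop c).filter Q := by
    conv_lhs => rw [hsplit]
    rw [List.filter_append]
    have : ((List.finRange k).take c).filter Q = [] := by
      rw [List.filter_eq_nil_iff]
      intro a ha hQa
      exact absurd (hQ a hQa) (by have := mem_take_finRange ha; omega)
    rw [this, List.nil_append]
  conv_lhs => rw [hsplit]
  rw [List.filter_append, hPd, hQd]
  congr 1
  · exact List.filter_congr fun x hx => h1 x (mem_take_finRange hx)
  · exact List.filter_congr fun x hx => h2 x (mem_drop_finRange hx)

lemma filter_finRange_eq_singleton {k b : ℕ} (hb : b < k) :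
    (List.finRange k).filter (fun j : Fin k => decide ((j : ℕ) = b)) = [⟨b, hb⟩] := by
  have hsplit : List.finRange k = (List.finRange k).take b ++ (List.finRange k).drop b :=
    (List.take_append_drop b (List.finRange k)).symm
  have hdrop : (List.finRange k).drop b = ⟨b, hb⟩ :: (List.finRange k).drop (b+1) := by
    have := List.getElem_cons_drop (as := List.finRange k) (i := b) (by simpa using hb)
    rw [← this]
    congr 1
    rw [List.getElem_finRange]
    rfl
  rw [hsplit, List.filter_append]
  have h1 : ((List.finRange k).take b).filter (fun j : Fin k => decide ((j : ℕ) = b)) = [] := by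
    rw [List.filter_eq_nil_iff]
    intro a ha hcon
    have := mem_take_finRange ha
    simp at hcon
    omega
  have h2 : ((List.finRange k).drop b).filter (fun j : Fin k => decide ((j : ℕ) = b))
      = [⟨b, hb⟩] := by
    have hnil : ((List.finRange k).drop (b+1)).filter
        (fun j : Fin k => decide ((j : ℕ) = b)) = [] := by
      rw [List.filter_eq_nil_iff]
      intro a ha hcon
      have := mem_drop_finRange ha
      simp at hcon
      omega
    rw [hdrop, List.filter_cons, hnil]
    simp
  rw [h1, h2, List.nil_append]

/-- The interval filter lemma: positions in `[a, b)` pick out `(ω.take b).drop a`. -/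
lemma filter_finRange_interval (ω : List α) (a b : ℕ) (hab : a ≤ b) (hbk : b ≤ ω.length) :
    (((List.finRange ω.length).filter
        (fun j : Fin ω.length => decide (a ≤ (j : ℕ) ∧ (j : ℕ) < b))).map ω.get)
      = (ω.take b).drop a := by
  induction b, hab using Nat.le_induction with
  | base =>
    have h1 : ((List.finRange ω.length).filter
        (fun j : Fin ω.length => decide (a ≤ (j : ℕ) ∧ (j : ℕ) < a))) = [] := by
      rw [List.filter_eq_nil_iff]
      intro x hx hcon
      simp at hcon
      omega
    have h2 : (ω.take a).drop a = [] := by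
      apply List.drop_eq_nil_of_le
      simp
    rw [h1, h2]
    rfl
  | succ b hab ih =>
    have hbk' : b < ω.length := by omega
    have hsplit := filter_finRange_split ω.length b
      (fun j : Fin ω.length => decide (a ≤ (j : ℕ) ∧ (j : ℕ) < b))
      (fun j : Fin ω.length => decide ((j : ℕ) = b))
      (fun j : Fin ω.length => decide (a ≤ (j : ℕ) ∧ (j : ℕ) < b + 1))
      (fun j hj => by simp only [decide_eq_decide]; omega)
      (fun j hj => by simp only [decide_eq_decide]; omega)
      (fun j hj => by simp only [decide_eq_true_eq] at hj; omega)
      (fun j hj => by simp only [decide_eq_true_eq] at hj; omega)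
    rw [hsplit, List.map_append, ih (by omega), filter_finRange_eq_singleton hbk']
    have hgetb : ω.get ⟨b, hbk'⟩ = ω[b] := rfl
    have htake : ω.take (b+1) = ω.take b ++ [ω[b]] := by
      rw [List.take_succ]
      congr 1
      rw [List.getElem?_eq_getElem hbk']
      rfl
    rw [htake, List.drop_append_of_le_length (by simp; omega)]
    simp [hgetb]

end ListLemmas

section WordLemmas
variable [Fintype B] [DecidableEq B] {M : CoxeterMatrix B}
variable {cs : CoxeterSystem M W} {ρ π : W →* (B → ℝ) ≃ₗ[ℝ] (B → ℝ)}
variable {x : W} {ω : List B} {p : ℕ} {ι : Fin p → Fin ω.length}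

lemma take_drop_word (cs : CoxeterSystem M W) (ω : List B) (a b : ℕ) (hab : a ≤ b) :
    cs.wordProd (ω.take b) = cs.wordProd (ω.take a) * cs.wordProd ((ω.take b).drop a) := by
  rw [← cs.wordProd_append]
  congr 1
  have : ω.take a = (ω.take b).take a := by rw [List.take_take, min_eq_left hab]
  rw [this, List.take_append_drop]

lemma seg_cons (cs : CoxeterSystem M W) (ω : List B) (a b : ℕ) (h : a < b) (hb : b ≤ ω.length) :
    cs.wordProd ((ω.take b).drop a)
      = cs.simple (ω.get ⟨a, by omega⟩) * cs.wordProd ((ω.take b).drop (a+1)) := by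
  have hlen : a < (ω.take b).length := by simp; omega
  have hcons := List.getElem_cons_drop (as := ω.take b) (i := a) hlen
  rw [← hcons, cs.wordProd_cons]
  congr 2
  rw [List.getElem_take]
  rfl

lemma omit_eq_filter (cs : CoxeterSystem M W) (x : W) (ω : List B) (ι : Fin p → Fin ω.length)
    (n : Fin p) :
    omitProd cs x ω ι n = x * cs.wordProd (((List.finRange ω.length).filter
      (fun j : Fin ω.length =>
        decide ((j : ℕ) < (ι n : ℕ) ∧ ∀ m : Fin p, m < n → j ≠ ι m))).map ω.get) := rfl

lemma omit_zero (cs : CoxeterSystem M W) (x : W) (ω : List B) (ι : Fin p → Fin ω.length)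
    (n : Fin p) (hn : ∀ m : Fin p, ¬ m < n) :
    omitProd cs x ω ι n = x * cs.wordProd (ω.take (ι n)) := by
  rw [omit_eq_filter]
  congr 2
  have hcong : ((List.finRange ω.length).filter
      (fun j : Fin ω.length =>
        decide ((j : ℕ) < (ι n : ℕ) ∧ ∀ m : Fin p, m < n → j ≠ ι m)))
      = ((List.finRange ω.length).filter
      (fun j : Fin ω.length => decide (0 ≤ (j : ℕ) ∧ (j : ℕ) < (ι n : ℕ)))) := by
    apply List.filter_congr
    intro j _
    simp only [decide_eq_decide]
    constructor
    · intro ⟨h1, _⟩; exact ⟨Nat.zero_le _, h1⟩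
    · intro ⟨_, h1⟩; exact ⟨h1, fun m hm => absurd hm (hn m)⟩
  rw [hcong, filter_finRange_interval ω 0 (ι n : ℕ) (Nat.zero_le _) (by omega)]
  simp

lemma omit_succ (cs : CoxeterSystem M W) (x : W) (ω : List B) (ι : Fin p → Fin ω.length)
    (hι : StrictMono ι) (n n' : Fin p) (hs : (n' : ℕ) = (n : ℕ) + 1) :
    omitProd cs x ω ι n'
      = omitProd cs x ω ι n * cs.wordProd ((ω.take (ι n')).drop ((ι n : ℕ) + 1)) := by
  have hnn' : n < n' := by rw [Fin.lt_def]; omega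
  have hι' : (ι n : ℕ) < (ι n' : ℕ) := hι hnn'
  rw [omit_eq_filter, omit_eq_filter]
  have hsplit := filter_finRange_split ω.length ((ι n : ℕ) + 1)
    (fun j : Fin ω.length =>
      decide ((j : ℕ) < (ι n : ℕ) ∧ ∀ m : Fin p, m < n → j ≠ ι m))
    (fun j : Fin ω.length => decide ((ι n : ℕ) + 1 ≤ (j : ℕ) ∧ (j : ℕ) < (ι n' : ℕ)))
    (fun j : Fin ω.length =>
      decide ((j : ℕ) < (ι n' : ℕ) ∧ ∀ m : Fin p, m < n' → j ≠ ι m))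
    ?_ ?_ ?_ ?_
  · rw [hsplit, List.map_append, cs.wordProd_append, mul_assoc]
    congr 2
    rw [filter_finRange_interval ω ((ι n : ℕ) + 1) (ι n' : ℕ) (by omega) (by omega)]
  · -- below cutoff : R = P
    intro j hj
    simp only [decide_eq_decide]
    constructor
    · intro ⟨hj1, hj2⟩
      have hjn : j ≠ ι n := hj2 n hnn'
      have : (j : ℕ) ≠ (ι n : ℕ) := fun h => hjn (Fin.ext h)
      exact ⟨by omega, fun m hm => hj2 m (lt_trans hm hnn')⟩
    · intro ⟨hj1, hj2⟩
      refine ⟨by omega, fun m hm => ?_⟩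
      by_cases hmn : m = n
      · subst hmn
        intro hcon
        rw [hcon] at hj1
        omega
      · have hne : (m : ℕ) ≠ (n : ℕ) := fun hc => hmn (Fin.ext hc)
        have hmln : m < n := by
          rw [Fin.lt_def] at hm ⊢
          omega
        exact hj2 m hmln
  · -- above cutoff : R = Q
    intro j hj
    simp only [decide_eq_decide]
    constructor
    · intro ⟨hj1, _⟩
      exact ⟨by omega, hj1⟩
    · intro ⟨_, hj1⟩
      refine ⟨hj1, fun m hm => ?_⟩
      have hmlen : (m : ℕ) ≤ (n : ℕ) := by rw [Fin.lt_def] at hm; omega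
      have : (ι m : ℕ) ≤ (ι n : ℕ) := by
        rcases eq_or_lt_of_le (Fin.le_def.mpr hmlen : m ≤ n) with h | h
        · rw [h]
        · exact le_of_lt (hι h)
      intro hcon
      subst hcon
      omega
  · intro j hj
    simp only [decide_eq_true_eq] at hj
    omega
  · intro j hj
    simp only [decide_eq_true_eq] at hj
    omega

lemma sigma_mul_xseq (cs : CoxeterSystem M W) (x : W) (ω : List B) (ι : Fin p → Fin ω.length)
    (n : Fin p) :
    sigmaseq cs x ω ι n * xseq cs x ω ι n
      = xseq cs x ω ι n * cs.simple (ω.get (ι n)) := by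
  unfold sigmaseq
  group

lemma sigma_inv_mul (cs : CoxeterSystem M W) (x : W) (ω : List B) (ι : Fin p → Fin ω.length)
    (n : Fin p) :
    (sigmaseq cs x ω ι n)⁻¹ * xseq cs x ω ι n
      = xseq cs x ω ι n * cs.simple (ω.get (ι n)) := by
  unfold sigmaseq
  rw [mul_inv_rev, mul_inv_rev, inv_inv, cs.inv_simple]
  group

lemma key_eseq (cs : CoxeterSystem M W) (x : W) (ω : List B) (ι : Fin p → Fin ω.length)
    (hι : StrictMono ι) :
    ∀ (nv : ℕ) (h : nv < p),
      xseq cs x ω ι ⟨nv, h⟩ = eseq cs x ω ι nv * omitProd cs x ω ι ⟨nv, h⟩ := by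
  intro nv
  induction nv with
  | zero =>
    intro h
    rw [show eseq cs x ω ι 0 = 1 from rfl, one_mul]
    rw [omit_zero cs x ω ι ⟨0, h⟩ (fun m hm => by simp [Fin.lt_def] at hm)]
    rfl
  | succ nv ih =>
    intro h
    have hnv : nv < p := by omega
    set n : Fin p := ⟨nv, hnv⟩
    set n' : Fin p := ⟨nv+1, h⟩
    have heseq : eseq cs x ω ι (nv+1) = sigmaseq cs x ω ι n * eseq cs x ω ι nv := by
      show (if h' : nv < p then sigmaseq cs x ω ι ⟨nv, h'⟩ else 1) * eseq cs x ω ι nv = _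
      rw [dif_pos hnv]
    rw [heseq, omit_succ cs x ω ι hι n n' rfl, mul_assoc,  ← mul_assoc (eseq cs x ω ι nv),
      ← ih hnv, ← mul_assoc, sigma_mul_xseq, mul_assoc]
    have hseg : cs.simple (ω.get (ι n)) * cs.wordProd ((ω.take (ι n')).drop ((ι n : ℕ) + 1))
        = cs.wordProd ((ω.take (ι n')).drop (ι n : ℕ)) := by
      rw [seg_cons cs ω (ι n : ℕ) (ι n' : ℕ) (hι (Fin.mk_lt_mk.mpr (Nat.lt_succ_self nv))) (by omega)]
    rw [hseg]
    show xseq cs x ω ι n' = xseq cs x ω ι n * _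
    unfold xseq
    rw [mul_assoc]
    congr 1
    exact take_drop_word cs ω (ι n : ℕ) (ι n' : ℕ) (le_of_lt (hι (Fin.mk_lt_mk.mpr (Nat.lt_succ_self nv))))

end WordLemmas

section Assembly
variable [Fintype B] [DecidableEq B] {M : CoxeterMatrix B}
variable {cs : CoxeterSystem M W} {ρ π : W →* (B → ℝ) ≃ₗ[ℝ] (B → ℝ)}

lemma pair_contra (hπ : IsContraRep ρ π) (w : W) (f α : B → ℝ) :
    pair (π w f) α = pair f (ρ w⁻¹ α) := by
  have h := hπ w f (ρ w⁻¹ α)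
  have e : ρ w (ρ w⁻¹ α) = α := by
    calc ρ w (ρ w⁻¹ α) = (ρ w * ρ w⁻¹) α := rfl
      _ = α := by rw [← map_mul, mul_inv_cancel, map_one]; rfl
  rwa [e] at h

lemma pair_pos_of_cham (f₀ : B → ℝ) (hf : f₀ ∈ domCham B) (v : B → ℝ)
    (hv : ∀ b, 0 ≤ v b) (hv0 : v ≠ 0) : 0 < pair f₀ v := by
  have hfpos : ∀ i : B, 0 < f₀ i := by
    intro i
    have := hf i
    rwa [pair_sroot] at this
  obtain ⟨b, hb⟩ : ∃ b, v b ≠ 0 := by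
    by_contra hcon
    push_neg at hcon
    exact hv0 (funext hcon)
  unfold pair
  apply Finset.sum_pos'
  · intro i _
    exact mul_nonneg (le_of_lt (hfpos i)) (hv i)
  · exact ⟨b, Finset.mem_univ b, mul_pos (hfpos b) (lt_of_le_of_ne (hv b) (Ne.symm hb))⟩

lemma rho_sroot_ne (ρ : W →* (B → ℝ) ≃ₗ[ℝ] (B → ℝ)) (w : W) (i : B) :
    ρ w (sroot i) ≠ 0 := by
  intro h
  have h2 : sroot i = (0 : B → ℝ) := by
    apply (ρ w).injective
    rw [h, map_zero]
  have := congrFun h2 i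
  simp [sroot] at this

lemma main_sign (hρ : IsGeomRep M cs ρ) (hπ : IsContraRep ρ π) (z y : W) (i : B)
    (f : B → ℝ) (hf : f ∈ cham π z) (h : ¬ cs.IsRightDescent (z⁻¹ * y) i) :
    0 < pair f (ρ y (sroot i)) := by
  obtain ⟨f₀, hf₀, rfl⟩ := hf
  rw [pair_contra hπ]
  have e : ρ z⁻¹ (ρ y (sroot i)) = ρ (z⁻¹ * y) (sroot i) := by rw [map_mul]; rfl
  rw [e]
  exact pair_pos_of_cham f₀ hf₀ _ (rho_nonneg hρ (cs.length (z⁻¹ * y)) (z⁻¹ * y) i rfl h)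
    (rho_sroot_ne ρ _ i)

end Assembly

/-- for `1 ≤ n ≤ p`, the chambers `x₁C` and `e_nC` lie on the same side
of `H_n`. -/
theorem statement13 [Fintype B] [DecidableEq B] {M : CoxeterMatrix B}
    (cs : CoxeterSystem M W) (ρ π : W →* (B → ℝ) ≃ₗ[ℝ] (B → ℝ))
    (hρ : IsGeomRep M cs ρ) (hπ : IsContraRep ρ π)
    (x y : W) (ω : List B) (hred : cs.IsReduced ω) (hy : cs.wordProd ω = y)
    (p : ℕ) (ι : Fin p → Fin ω.length) (hι : StrictMono ι)
    (hdesc : DescCond cs x ω ι)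
    (n : ℕ) (hn1 : 1 ≤ n) (hnp : n ≤ p) :
    ∀ f ∈ cham π (xseq cs x ω ι ⟨0, by omega⟩),
      ∀ g ∈ cham π (eseq cs x ω ι n),
        ¬ SepPt (rootseq cs ρ x ω ι ⟨n - 1, by omega⟩) f g := by
  intro f hf g hg
  have hp0 : 0 < p := by omega
  have hn1p : n - 1 < p := by omega
  set n' : Fin p := ⟨n - 1, hn1p⟩ with hn'def
  set z0 : Fin p := ⟨0, hp0⟩ with hz0def
  set i' : B := ω.get (ι n') with hi'def
  set a : ℕ := (ι z0 : ℕ) with hadef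
  set b : ℕ := (ι n' : ℕ) with hbdef
  have hab : a ≤ b := by
    have : z0 ≤ n' := by rw [Fin.mk_le_mk]; omega
    exact hι.monotone this
  have hbk : b < ω.length := (ι n').isLt
  -- positivity for f
  have heq1 : (xseq cs x ω ι z0)⁻¹ * xseq cs x ω ι n'
      = cs.wordProd ((ω.take b).drop a) := by
    unfold xseq
    rw [take_drop_word cs ω a b hab]
    rw [← hadef]
    group
  have hseg_red : cs.IsReduced ((ω.take b).drop a) :=
    CoxeterSystem.IsReduced.drop (CoxeterSystem.IsReduced.take hred b) a
  have hseg1_red : cs.IsReduced ((ω.take (b+1)).drop a) :=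
    CoxeterSystem.IsReduced.drop (CoxeterSystem.IsReduced.take hred (b+1)) a
  have htake1 : ω.take (b+1) = ω.take b ++ [ω[b]] := by
    rw [List.take_succ]
    congr 1
    rw [List.getElem?_eq_getElem hbk]
    rfl
  have hseg1 : (ω.take (b+1)).drop a = (ω.take b).drop a ++ [ω[b]] := by
    rw [htake1, List.drop_append_of_le_length (by simp; omega)]
  have hlenseg : cs.length (cs.wordProd ((ω.take b).drop a)) = b - a := by
    have := hseg_red
    unfold CoxeterSystem.IsReduced at this
    rw [this]
    simp
    omega
  have hlenseg1 : cs.length (cs.wordProd ((ω.take (b+1)).drop a)) = b + 1 - a := by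
    have := hseg1_red
    unfold CoxeterSystem.IsReduced at this
    rw [this]
    simp
    omega
  have hi'gb : cs.simple i' = cs.simple (ω[b]) := rfl
  have hnd1 : ¬ cs.IsRightDescent (cs.wordProd ((ω.take b).drop a)) i' := by
    intro hcon
    have hlt : cs.length (cs.wordProd ((ω.take b).drop a) * cs.simple i')
        < cs.length (cs.wordProd ((ω.take b).drop a)) := hcon
    have he : cs.wordProd ((ω.take b).drop a) * cs.simple i'
        = cs.wordProd ((ω.take (b+1)).drop a) := by
      rw [hseg1, cs.wordProd_append, cs.wordProd_singleton, hi'gb]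
    rw [he, hlenseg1, hlenseg] at hlt
    omega
  have pos1 : 0 < pair f (ρ (xseq cs x ω ι n') (sroot i')) := by
    apply main_sign hρ hπ (xseq cs x ω ι z0) (xseq cs x ω ι n') i' f hf
    rw [heq1]
    exact hnd1
  -- positivity for g
  have he : eseq cs x ω ι n = sigmaseq cs x ω ι n' * eseq cs x ω ι (n-1) := by
    obtain ⟨nv, rfl⟩ : ∃ nv, n = nv + 1 := ⟨n - 1, by omega⟩
    show (if h' : nv < p then sigmaseq cs x ω ι ⟨nv, h'⟩ else 1) * eseq cs x ω ι nv = _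
    rw [dif_pos (by omega : nv < p)]
    rfl
  have hkey := key_eseq cs x ω ι hι (n-1) hn1p
  have heq2 : (eseq cs x ω ι n)⁻¹ * xseq cs x ω ι n'
      = omitProd cs x ω ι n' * cs.simple i' := by
    rw [he, mul_inv_rev, mul_assoc, sigma_inv_mul cs x ω ι n']
    rw [show xseq cs x ω ι n' = eseq cs x ω ι (n-1) * omitProd cs x ω ι n' from hkey]
    group
    rfl
  have hdescn : cs.IsRightDescent (omitProd cs x ω ι n') i' := hdesc n'
  have hnd2 : ¬ cs.IsRightDescent (omitProd cs x ω ι n' * cs.simple i') i' :=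
    (cs.isRightDescent_iff_not_isRightDescent_mul).mp hdescn
  have pos2 : 0 < pair g (ρ (xseq cs x ω ι n') (sroot i')) := by
    apply main_sign hρ hπ (eseq cs x ω ι n) (xseq cs x ω ι n') i' g hg
    rw [heq2]
    exact hnd2
  -- conclude
  intro hcon
  unfold SepPt at hcon
  have hroot : rootseq cs ρ x ω ι ⟨n - 1, by omega⟩ = ρ (xseq cs x ω ι n') (sroot i') := rfl
  rw [hroot] at hcon
  nlinarith

end PaperBound
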